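/- Fix integers k₁, k₂ ≥ 1 and d ≥ 2, and consider the polynomial Q(z) = z^(2(k₁+k₂)) + ((1−d)/(d+1))·z^(2k₁) + ((1−d)/(d+1))·z^(2k₂) + 1 in ℚ[z]. Q has integer coefficients if and only if (1−d)/(d+1) is an integer (when k₁ ≠ k₂), or (k₁ = k₂ and 2(1−d)/(d+1) is an integer). In particular, if Q is a product of cyclotomic polynomials (hence in ℤ[z] monic), then k₁ = k₂ and d = 3. -/

import Mathlib

open Polynomial

lemma aux_c_bounds (d : ℕ) (hd : 2 ≤ d) :
    -1 < (1 - (d : ℚ)) / ((d : ℚ) + 1) ∧ (1 - (d : ℚ)) / ((d : ℚ) + 1) < 0 := by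
  have hd' : (2 : ℚ) ≤ d := by exact_mod_cast hd
  have hpos : (0 : ℚ) < (d : ℚ) + 1 := by linarith
  constructor
  · rw [lt_div_iff₀ hpos]; linarith
  · rw [div_lt_iff₀ hpos]; linarith

lemma aux_c_not_int (d : ℕ) (hd : 2 ≤ d) :
    ¬ ∃ m : ℤ, (1 - (d : ℚ)) / ((d : ℚ) + 1) = (m : ℚ) := by
  rintro ⟨m, hm⟩
  obtain ⟨h1, h2⟩ := aux_c_bounds d hd
  rw [hm] at h1 h2
  have h1' : (-1 : ℤ) < m := by exact_mod_cast h1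
  have h2' : m < 0 := by exact_mod_cast h2
  omega

lemma aux_2c_int_iff (d : ℕ) (hd : 2 ≤ d) :
    (∃ m : ℤ, 2 * (1 - (d : ℚ)) / ((d : ℚ) + 1) = (m : ℚ)) ↔ d = 3 := by
  constructor
  · rintro ⟨m, hm⟩
    obtain ⟨h1, h2⟩ := aux_c_bounds d hd
    have hpos : (0 : ℚ) < (d : ℚ) + 1 := by positivity
    have e : 2 * (1 - (d : ℚ)) / ((d : ℚ) + 1) = 2 * ((1 - (d : ℚ)) / ((d : ℚ) + 1)) := by
      ring
    rw [e] at hm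
    have h1' : (-2 : ℚ) < m := by rw [← hm]; linarith
    have h2' : (m : ℚ) < 0 := by rw [← hm]; linarith
    have h1'' : (-2 : ℤ) < m := by exact_mod_cast h1'
    have h2'' : m < 0 := by exact_mod_cast h2'
    have hm1 : m = -1 := by omega
    rw [hm1] at hm
    have : 2 * (1 - (d : ℚ)) = -1 * ((d : ℚ) + 1) := by
      field_simp at hm; push_cast at hm; linarith
    have hdq : (d : ℚ) = 3 := by linarith
    exact_mod_cast hdq
  · rintro rfl
    exact ⟨-1, by norm_num⟩

theorem two_branching_integer_coeff_iff (k₁ k₂ : ℕ) (d : ℕ) (hk₁ : 1 ≤ k₁) (hk₂ : 1 ≤ k₂)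
    (hd : 2 ≤ d) :
    ((∀ n : ℕ, ∃ m : ℤ,
        ((X : ℚ[X]) ^ (2 * (k₁ + k₂)) + C ((1 - (d : ℚ)) / ((d : ℚ) + 1)) * X ^ (2 * k₁)
          + C ((1 - (d : ℚ)) / ((d : ℚ) + 1)) * X ^ (2 * k₂) + 1).coeff n = (m : ℚ)) ↔
      ((k₁ ≠ k₂ ∧ ∃ m : ℤ, (1 - (d : ℚ)) / ((d : ℚ) + 1) = (m : ℚ)) ∨
       (k₁ = k₂ ∧ ∃ m : ℤ, 2 * (1 - (d : ℚ)) / ((d : ℚ) + 1) = (m : ℚ)))) ∧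
    ((∃ L : List ℕ,
        (X : ℚ[X]) ^ (2 * (k₁ + k₂)) + C ((1 - (d : ℚ)) / ((d : ℚ) + 1)) * X ^ (2 * k₁)
          + C ((1 - (d : ℚ)) / ((d : ℚ) + 1)) * X ^ (2 * k₂) + 1
          = (L.map fun j => Polynomial.cyclotomic j ℚ).prod) →
      k₁ = k₂ ∧ d = 3) := by
  set c : ℚ := (1 - (d : ℚ)) / ((d : ℚ) + 1) with hc
  set Q : ℚ[X] := (X : ℚ[X]) ^ (2 * (k₁ + k₂)) + C c * X ^ (2 * k₁)
      + C c * X ^ (2 * k₂) + 1 with hQ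
  have coeffQ : ∀ n : ℕ, Q.coeff n =
      (if n = 2 * (k₁ + k₂) then 1 else 0) + (if n = 2 * k₁ then c else 0)
        + (if n = 2 * k₂ then c else 0) + (if n = 0 then 1 else 0) := by
    intro n
    simp [hQ, coeff_add, coeff_C_mul, coeff_X_pow, coeff_one, mul_ite]
  have hiff : (∀ n : ℕ, ∃ m : ℤ, Q.coeff n = (m : ℚ)) ↔
      ((k₁ ≠ k₂ ∧ ∃ m : ℤ, c = (m : ℚ)) ∨ (k₁ = k₂ ∧ ∃ m : ℤ, 2 * c = (m : ℚ))) := by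
    rcases eq_or_ne k₁ k₂ with heq | hne
    · subst heq
      constructor
      · intro h
        obtain ⟨m, hm⟩ := h (2 * k₁)
        rw [coeffQ] at hm
        have h1 : 2 * k₁ ≠ 2 * (k₁ + k₁) := by omega
        have h2 : 2 * k₁ ≠ 0 := by omega
        rw [if_neg h1, if_pos rfl, if_neg h2] at hm
        refine Or.inr ⟨rfl, m, ?_⟩
        linarith
      · rintro (⟨h, _⟩ | ⟨_, m, hm⟩)
        · exact absurd rfl h
        intro n
        rw [coeffQ]
        by_cases hn1 : n = 2 * k₁
        · have h1 : n ≠ 2 * (k₁ + k₁) := by omega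
          have h2 : n ≠ 0 := by omega
          rw [if_neg h1, if_pos hn1, if_neg h2]
          exact ⟨m, by linarith⟩
        · by_cases hn2 : n = 2 * (k₁ + k₁)
          · refine ⟨1, ?_⟩
            rw [if_pos hn2, if_neg hn1, if_neg (by omega : n ≠ 0)]
            norm_num
          · by_cases hn0 : n = 0
            · refine ⟨1, ?_⟩
              rw [if_neg hn2, if_neg hn1, if_pos hn0]
              norm_num
            · refine ⟨0, ?_⟩
              rw [if_neg hn2, if_neg hn1, if_neg hn0]
              norm_num
    · constructor
      · intro h
        obtain ⟨m, hm⟩ := h (2 * k₁)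
        rw [coeffQ] at hm
        have h1 : 2 * k₁ ≠ 2 * (k₁ + k₂) := by omega
        have h2 : 2 * k₁ ≠ 2 * k₂ := by omega
        have h3 : 2 * k₁ ≠ 0 := by omega
        rw [if_neg h1, if_pos rfl, if_neg h2, if_neg h3] at hm
        exact absurd ⟨m, by linarith⟩ (aux_c_not_int d hd)
      · rintro (⟨_, hcint⟩ | ⟨heq, _⟩)
        · exact absurd hcint (aux_c_not_int d hd)
        · exact absurd heq hne
  have h2c : (∃ m : ℤ, 2 * c = (m : ℚ)) ↔ (∃ m : ℤ, 2 * (1 - (d : ℚ)) / ((d : ℚ) + 1) = (m : ℚ)) := by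
    constructor <;> rintro ⟨m, hm⟩ <;> exact ⟨m, by rw [← hm, hc]; ring⟩
  constructor
  · rw [hiff, h2c]
  · rintro ⟨L, hL⟩
    have hint : ∀ n : ℕ, ∃ m : ℤ, Q.coeff n = (m : ℚ) := by
      have hmap : (L.map fun j => Polynomial.cyclotomic j ℚ).prod
          = Polynomial.map (Int.castRingHom ℚ) ((L.map fun j => Polynomial.cyclotomic j ℤ).prod) := by
        rw [Polynomial.map_list_prod, List.map_map]
        congr 1
        ext j
        simp [map_cyclotomic_int]
      intro n
      refine ⟨((L.map fun j => Polynomial.cyclotomic j ℤ).prod).coeff n, ?_⟩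
      rw [hL, hmap, coeff_map]
      simp
    rcases hiff.mp hint with ⟨_, hcint⟩ | ⟨heq, h2cint⟩
    · exact absurd hcint (aux_c_not_int d hd)
    · exact ⟨heq, (aux_2c_int_iff d hd).mp (h2c.mp h2cint)⟩
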